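/- arXiv:2002.03438 — 4 statements merged into one kernel-verified Lean document; each statement's English description precedes it below -/
import Mathlib

section
/- (Chernoff–Stein lemma, converse direction.) Let P and Q be probability mass functions on a common finite alphabet 𝒜 with Q(a) > 0 for every a ∈ 𝒜, and fix ε ∈ (0,1). For each n, let β_ε^n = min { Q^{⊗n}(A) : A ⊆ 𝒜^n, P^{⊗n}(A) ≥ 1 − ε }, where P^{⊗n} and Q^{⊗n} are the n-fold product distributions on 𝒜^n. Then liminf_{n→∞} (1/n)·log β_ε^n ≥ −D_KL(P‖Q). -/
open scoped BigOperators

/-- Swap a sum of products over tuples into a product of sums. -/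
lemma stein_sum_prod_swap {α : Type*} [Fintype α] [DecidableEq α] (n : ℕ) (F : Fin n → α → ℝ) :
    ∑ x : Fin n → α, ∏ k, F k (x k) = ∏ k, ∑ a, F k a :=
  (Fintype.prod_sum F).symm

/-- Second moment of a centered i.i.d. sum over a finite product space. -/
lemma stein_second_moment {α : Type*} [Fintype α] [DecidableEq α] (n : ℕ) (P g : α → ℝ)
    (hsum : ∑ a, P a = 1) (hmean : ∑ a, P a * g a = 0) :
    ∑ x : Fin n → α, (∏ k, P (x k)) * (∑ i, g (x i)) ^ 2
      = (n : ℝ) * ∑ a, P a * g a ^ 2 := by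
  have key : ∀ i j : Fin n,
      (∑ x : Fin n → α, (∏ k, P (x k)) * (g (x i) * g (x j)))
        = if i = j then ∑ a, P a * g a ^ 2 else 0 := by
    intro i j
    have hx : ∀ x : Fin n → α,
        (∏ k, P (x k)) * (g (x i) * g (x j))
          = ∏ k, (P (x k) * ((if i = k then g (x k) else 1) * (if j = k then g (x k) else 1))) := by
      intro x
      rw [Finset.prod_mul_distrib, Finset.prod_mul_distrib, Finset.prod_ite_eq,
        Finset.prod_ite_eq]
      simp
    rw [Finset.sum_congr rfl fun x _ => hx x]
    rw [stein_sum_prod_swap n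
      (fun k a => P a * ((if i = k then g a else 1) * (if j = k then g a else 1)))]
    by_cases h : i = j
    · subst h
      rw [if_pos rfl]
      have hk : ∀ k : Fin n,
          (∑ a, P a * ((if i = k then g a else 1) * (if i = k then g a else 1)))
            = if i = k then (∑ a, P a * g a ^ 2) else 1 := by
        intro k
        by_cases hk : i = k
        · subst hk
          simp only [eq_self_iff_true, if_true]
          exact Finset.sum_congr rfl fun a _ => by ring
        · simp [hk, hsum]
      rw [Finset.prod_congr rfl fun k _ => hk k, Finset.prod_ite_eq]
      simp
    · rw [if_neg h]
      apply Finset.prod_eq_zero (Finset.mem_univ i)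
      have : ∀ a, P a * ((if i = i then g a else 1) * (if j = i then g a else 1))
          = P a * g a := by
        intro a
        rw [if_pos rfl, if_neg fun hji => h hji.symm]
        ring
      rw [Finset.sum_congr rfl fun a _ => this a, hmean]
  calc ∑ x : Fin n → α, (∏ k, P (x k)) * (∑ i, g (x i)) ^ 2
      = ∑ x : Fin n → α, ∑ i, ∑ j, (∏ k, P (x k)) * (g (x i) * g (x j)) := by
        apply Finset.sum_congr rfl
        intro x _
        rw [sq, Finset.sum_mul_sum]
        rw [Finset.mul_sum]
        apply Finset.sum_congr rfl
        intro i _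
        rw [Finset.mul_sum]
    _ = ∑ i, ∑ j, ∑ x : Fin n → α, (∏ k, P (x k)) * (g (x i) * g (x j)) := by
        rw [Finset.sum_comm]
        apply Finset.sum_congr rfl
        intro i _
        rw [Finset.sum_comm]
    _ = ∑ i : Fin n, ∑ j : Fin n, (if i = j then ∑ a, P a * g a ^ 2 else 0) := by
        apply Finset.sum_congr rfl; intro i _
        apply Finset.sum_congr rfl; intro j _
        exact key i j
    _ = ∑ _i : Fin n, ∑ a, P a * g a ^ 2 := by
        apply Finset.sum_congr rfl; intro i _
        rw [Finset.sum_ite_eq]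
        simp
    _ = (n : ℝ) * ∑ a, P a * g a ^ 2 := by
        rw [Finset.sum_const, Finset.card_univ, Fintype.card_fin, nsmul_eq_mul]

/-- **Chernoff–Stein lemma, converse direction.**  For probability mass functions `P`, `Q`
on a finite alphabet `α` with `Q` everywhere positive and `ε ∈ (0,1)`, let
`β n = min { Q^⊗n(A) : A ⊆ αⁿ, P^⊗n(A) ≥ 1 − ε }` be the Neyman–Pearson error of the optimal
test on `n` i.i.d. samples.  Then `liminf (1/n) log (β n) ≥ −D_KL(P‖Q)`. -/
theorem stein_converse
    {α : Type*} [Fintype α] [Nonempty α] [DecidableEq α]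
    (P Q : α → ℝ)
    (hP_nonneg : ∀ a, 0 ≤ P a) (hP_sum : ∑ a, P a = 1)
    (hQ_pos : ∀ a, 0 < Q a) (hQ_sum : ∑ a, Q a = 1)
    (ε : ℝ) (hε : ε ∈ Set.Ioo (0 : ℝ) 1)
    (β : ℕ → ℝ)
    (hβ : ∀ n, β n = sInf { b : ℝ | ∃ A : Finset (Fin n → α),
        1 - ε ≤ ∑ x ∈ A, ∏ i, P (x i) ∧ b = ∑ x ∈ A, ∏ i, Q (x i) }) :
    -(∑ a ∈ Finset.univ.filter (fun a => 0 < P a), P a * Real.log (P a / Q a)) ≤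
      Filter.liminf (fun n : ℕ => (1 / (n : ℝ)) * Real.log (β n)) Filter.atTop := by
  classical
  set d : ℝ := ∑ a ∈ Finset.univ.filter (fun a => 0 < P a), P a * Real.log (P a / Q a) with hd
  set g : α → ℝ := fun a => Real.log (P a / Q a) - d with hg
  -- the full-sum form of d
  have hd' : ∑ a, P a * Real.log (P a / Q a) = d := by
    rw [hd]
    symm
    apply Finset.sum_filter_of_ne
    intro a _ hne
    rcases (hP_nonneg a).lt_or_eq with h | h
    · exact h
    · exact absurd (by rw [← h]; ring) hne
  have hmean : ∑ a, P a * g a = 0 := by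
    simp only [hg, mul_sub]
    rw [Finset.sum_sub_distrib, hd', ← Finset.sum_mul, hP_sum, one_mul, sub_self]
  set V : ℝ := ∑ a, P a * g a ^ 2 with hV
  have hVnonneg : 0 ≤ V := by
    apply Finset.sum_nonneg
    intro a _
    exact mul_nonneg (hP_nonneg a) (sq_nonneg _)
  -- the set defining β n is nonempty and bounded below, with 1 as an element
  have hPn_nonneg : ∀ (n : ℕ) (x : Fin n → α), 0 ≤ ∏ k, P (x k) := fun n x =>
    Finset.prod_nonneg fun k _ => hP_nonneg (x k)
  have hQn_pos : ∀ (n : ℕ) (x : Fin n → α), 0 < ∏ k, Q (x k) := fun n x =>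
    Finset.prod_pos fun k _ => hQ_pos (x k)
  have hone : ∀ n : ℕ, (1 : ℝ) ∈ { b : ℝ | ∃ A : Finset (Fin n → α),
      1 - ε ≤ ∑ x ∈ A, ∏ i, P (x i) ∧ b = ∑ x ∈ A, ∏ i, Q (x i) } := by
    intro n
    refine ⟨Finset.univ, ?_, ?_⟩
    · rw [stein_sum_prod_swap n (fun _ a => P a)]
      simp [hP_sum]
      linarith [hε.1]
    · rw [stein_sum_prod_swap n (fun _ a => Q a)]
      simp [hQ_sum]
  have hbdd : ∀ n : ℕ, BddBelow { b : ℝ | ∃ A : Finset (Fin n → α),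
      1 - ε ≤ ∑ x ∈ A, ∏ i, P (x i) ∧ b = ∑ x ∈ A, ∏ i, Q (x i) } := by
    intro n
    refine ⟨0, ?_⟩
    rintro b ⟨A, _, rfl⟩
    exact Finset.sum_nonneg fun x _ => (hQn_pos n x).le
  -- upper bound: the liminf argument is everywhere ≤ 0
  have hup : ∀ n : ℕ, (1 / (n : ℝ)) * Real.log (β n) ≤ 0 := by
    intro n
    have h0 : 0 ≤ β n := by
      rw [hβ n]
      apply le_csInf ⟨1, hone n⟩
      rintro b ⟨A, _, rfl⟩
      exact Finset.sum_nonneg fun x _ => (hQn_pos n x).le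
    have h1 : β n ≤ 1 := by
      rw [hβ n]
      exact csInf_le (hbdd n) (hone n)
    have := Real.log_nonpos h0 h1
    have hn : (0 : ℝ) ≤ 1 / (n : ℝ) := by positivity
    calc (1 / (n : ℝ)) * Real.log (β n) ≤ (1 / (n : ℝ)) * 0 :=
          mul_le_mul_of_nonneg_left this hn
      _ = 0 := by ring
  -- main eventual lower bound
  have main : ∀ δ : ℝ, 0 < δ →
      ∀ᶠ n : ℕ in Filter.atTop, -d - δ ≤ (1 / (n : ℝ)) * Real.log (β n) := by
    intro δ hδ
    set δ₂ : ℝ := δ / 2 with hδ₂def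
    have hδ₂ : 0 < δ₂ := by positivity
    set c : ℝ := (1 - ε) / 2 with hcdef
    have hc : 0 < c := by
      have := hε.2
      simp only [hcdef]
      linarith
    have e1 : ∀ᶠ n : ℕ in Filter.atTop, 1 ≤ n := Filter.eventually_ge_atTop 1
    have e2 : ∀ᶠ n : ℕ in Filter.atTop, (V / δ₂ ^ 2) / (n : ℝ) ≤ c := by
      have ht := tendsto_const_div_atTop_nhds_zero_nat (V / δ₂ ^ 2)
      filter_upwards [ht.eventually (gt_mem_nhds hc)] with n hn using hn.le
    have e3 : ∀ᶠ n : ℕ in Filter.atTop, -δ₂ ≤ Real.log c / (n : ℝ) := by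
      have ht := tendsto_const_div_atTop_nhds_zero_nat (Real.log c)
      have hneg : -δ₂ < (0 : ℝ) := by linarith
      filter_upwards [ht.eventually (lt_mem_nhds hneg)] with n hn using hn.le
    filter_upwards [e1, e2, e3] with n hn1 hn2 hn3
    have hnpos : (0 : ℝ) < (n : ℝ) := by exact_mod_cast Nat.lt_of_lt_of_le Nat.zero_lt_one hn1
    -- Chebyshev
    set T : Finset (Fin n → α) :=
      Finset.univ.filter (fun x => ∑ i, g (x i) ≤ (n : ℝ) * δ₂) with hT
    set bad : ℝ := ∑ x ∈ Finset.univ.filter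
      (fun x : Fin n → α => ¬ (∑ i, g (x i) ≤ (n : ℝ) * δ₂)), ∏ k, P (x k) with hbaddef
    have hbad_nonneg : 0 ≤ bad := Finset.sum_nonneg fun x _ => hPn_nonneg n x
    have cheb1 : bad * ((n : ℝ) * δ₂) ^ 2 ≤ (n : ℝ) * V := by
      rw [hbaddef, Finset.sum_mul]
      calc ∑ x ∈ Finset.univ.filter
            (fun x : Fin n → α => ¬ (∑ i, g (x i) ≤ (n : ℝ) * δ₂)),
            (∏ k, P (x k)) * ((n : ℝ) * δ₂) ^ 2
          ≤ ∑ x ∈ Finset.univ.filter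
            (fun x : Fin n → α => ¬ (∑ i, g (x i) ≤ (n : ℝ) * δ₂)),
            (∏ k, P (x k)) * (∑ i, g (x i)) ^ 2 := by
            apply Finset.sum_le_sum
            intro x hx
            have hx' := (Finset.mem_filter.1 hx).2
            push_neg at hx'
            have h1 : (0 : ℝ) ≤ (n : ℝ) * δ₂ := by positivity
            exact mul_le_mul_of_nonneg_left
              (pow_le_pow_left₀ h1 hx'.le 2) (hPn_nonneg n x)
        _ ≤ ∑ x : Fin n → α, (∏ k, P (x k)) * (∑ i, g (x i)) ^ 2 := by
            apply Finset.sum_le_sum_of_subset_of_nonneg (Finset.filter_subset _ _)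
            intro x _ _
            exact mul_nonneg (hPn_nonneg n x) (sq_nonneg _)
        _ = (n : ℝ) * V := stein_second_moment n P g hP_sum hmean
    have hbadle : bad ≤ c := by
      have hsq : (0 : ℝ) < ((n : ℝ) * δ₂) ^ 2 := by positivity
      have : bad ≤ ((n : ℝ) * V) / ((n : ℝ) * δ₂) ^ 2 := (le_div_iff₀ hsq).2 cheb1
      have heq : ((n : ℝ) * V) / ((n : ℝ) * δ₂) ^ 2 = (V / δ₂ ^ 2) / (n : ℝ) := by
        field_simp
      calc bad ≤ (V / δ₂ ^ 2) / (n : ℝ) := by rw [← heq]; exact this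
        _ ≤ c := hn2
    -- lower bound on β n
    set E : ℝ := Real.exp (-((n : ℝ) * (d + δ₂))) with hEdef
    have hEpos : 0 < E := Real.exp_pos _
    have hkey : ∀ x : Fin n → α, (∑ i, g (x i)) ≤ (n : ℝ) * δ₂ →
        E * ∏ k, P (x k) ≤ ∏ k, Q (x k) := by
      intro x hxT
      by_cases hpos : ∀ k, 0 < P (x k)
      · have hPnpos : 0 < ∏ k, P (x k) := Finset.prod_pos fun k _ => hpos k
        have hsum' : ∑ k, Real.log (P (x k) / Q (x k)) ≤ (n : ℝ) * (d + δ₂) := by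
          have : ∑ k, Real.log (P (x k) / Q (x k)) = (∑ k, g (x k)) + (n : ℝ) * d := by
            have : ∀ k : Fin n, Real.log (P (x k) / Q (x k)) = g (x k) + d := by
              intro k; simp only [hg]; ring
            rw [Finset.sum_congr rfl fun k _ => this k, Finset.sum_add_distrib,
              Finset.sum_const, Finset.card_univ, Fintype.card_fin, nsmul_eq_mul]
          rw [this]
          nlinarith [hxT]
        have hfac : ∀ k : Fin n,
            Q (x k) = P (x k) * Real.exp (-(Real.log (P (x k) / Q (x k)))) := by
          intro k
          have hp := hpos k
          have hq := hQ_pos (x k)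
          rw [← Real.log_inv, Real.exp_log (by positivity)]
          field_simp
        calc E * ∏ k, P (x k)
            ≤ Real.exp (-(∑ k, Real.log (P (x k) / Q (x k)))) * ∏ k, P (x k) := by
              apply mul_le_mul_of_nonneg_right _ hPnpos.le
              exact Real.exp_le_exp.2 (neg_le_neg hsum')
          _ = ∏ k, (P (x k) * Real.exp (-(Real.log (P (x k) / Q (x k))))) := by
              rw [Finset.prod_mul_distrib, ← Real.exp_sum]
              rw [mul_comm]
              congr 1
              rw [← Finset.sum_neg_distrib]
          _ = ∏ k, Q (x k) := by
              exact Finset.prod_congr rfl fun k _ => (hfac k).symm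
      · push_neg at hpos
        obtain ⟨k, hk⟩ := hpos
        have hk0 : P (x k) = 0 := le_antisymm hk (hP_nonneg (x k))
        have : ∏ k, P (x k) = 0 := Finset.prod_eq_zero (Finset.mem_univ k) hk0
        rw [this, mul_zero]
        exact (hQn_pos n x).le
    have hβlow : c * E ≤ β n := by
      rw [hβ n]
      apply le_csInf ⟨1, hone n⟩
      rintro b ⟨A, hA, rfl⟩
      have hsplit : ∑ x ∈ A, ∏ k, P (x k)
          = (∑ x ∈ A.filter (fun x => ∑ i, g (x i) ≤ (n : ℝ) * δ₂), ∏ k, P (x k))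
            + ∑ x ∈ A.filter (fun x => ¬ (∑ i, g (x i) ≤ (n : ℝ) * δ₂)), ∏ k, P (x k) :=
        (Finset.sum_filter_add_sum_filter_not A _ _).symm
      have hminor : ∑ x ∈ A.filter (fun x => ¬ (∑ i, g (x i) ≤ (n : ℝ) * δ₂)),
          ∏ k, P (x k) ≤ bad := by
        rw [hbaddef]
        apply Finset.sum_le_sum_of_subset_of_nonneg
        · exact Finset.filter_subset_filter _ (Finset.subset_univ A)
        · intro x _ _; exact hPn_nonneg n x
      have hmajor : c ≤ ∑ x ∈ A.filter (fun x => ∑ i, g (x i) ≤ (n : ℝ) * δ₂),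
          ∏ k, P (x k) := by
        have : 1 - ε ≤ ∑ x ∈ A, ∏ k, P (x k) := hA
        rw [hsplit] at this
        have hb : ∑ x ∈ A.filter (fun x => ¬ (∑ i, g (x i) ≤ (n : ℝ) * δ₂)),
            ∏ k, P (x k) ≤ c := le_trans hminor hbadle
        simp only [hcdef] at *
        linarith
      calc c * E = E * c := by ring
        _ ≤ E * ∑ x ∈ A.filter (fun x => ∑ i, g (x i) ≤ (n : ℝ) * δ₂), ∏ k, P (x k) :=
            mul_le_mul_of_nonneg_left hmajor hEpos.le
        _ = ∑ x ∈ A.filter (fun x => ∑ i, g (x i) ≤ (n : ℝ) * δ₂), E * ∏ k, P (x k) :=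
            Finset.mul_sum _ _ _
        _ ≤ ∑ x ∈ A.filter (fun x => ∑ i, g (x i) ≤ (n : ℝ) * δ₂), ∏ k, Q (x k) := by
            apply Finset.sum_le_sum
            intro x hx
            exact hkey x (Finset.mem_filter.1 hx).2
        _ ≤ ∑ x ∈ A, ∏ k, Q (x k) := by
            apply Finset.sum_le_sum_of_subset_of_nonneg (Finset.filter_subset _ _)
            intro x _ _
            exact (hQn_pos n x).le
    -- conclude
    have hcE : 0 < c * E := mul_pos hc hEpos
    have hlog : Real.log c + (-((n : ℝ) * (d + δ₂))) ≤ Real.log (β n) := by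
      have := Real.log_le_log hcE hβlow
      rwa [Real.log_mul (ne_of_gt hc) (ne_of_gt hEpos), Real.log_exp] at this
    have hmul : (1 / (n : ℝ)) * (Real.log c + (-((n : ℝ) * (d + δ₂))))
        ≤ (1 / (n : ℝ)) * Real.log (β n) :=
      mul_le_mul_of_nonneg_left hlog (by positivity)
    have heval : (1 / (n : ℝ)) * (Real.log c + (-((n : ℝ) * (d + δ₂))))
        = Real.log c / (n : ℝ) - (d + δ₂) := by
      field_simp
      ring
    rw [heval] at hmul
    have : -d - δ ≤ Real.log c / (n : ℝ) - (d + δ₂) := by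
      simp only [hδ₂def] at *
      linarith
    linarith
  -- from the eventual bounds to the liminf
  have hcob : Filter.IsCoboundedUnder (· ≥ ·)
      Filter.atTop (fun n : ℕ => (1 / (n : ℝ)) * Real.log (β n)) :=
    Filter.isCoboundedUnder_ge_of_le Filter.atTop (x := 0) hup
  apply le_of_forall_pos_le_add
  intro δ hδ
  have h1 : -d - δ ≤ Filter.liminf (fun n : ℕ => (1 / (n : ℝ)) * Real.log (β n))
      Filter.atTop := Filter.le_liminf_of_le hcob (main δ hδ)
  linarith
end

section
/- (Error exponent for detecting a given language model in terms of cross-entropy.) Let P (the distribution of authentic text tokens) and Q (the distribution of language-model-generated tokens) be probability mass functions on a common finite alphabet 𝒜 with Q(a) > 0 for every a ∈ 𝒜, and fix ε ∈ (0,1). For each n, let β_ε^n = min { Q^{⊗n}(A) : A ⊆ 𝒜^n, P^{⊗n}(A) ≥ 1 − ε }. Then lim_{n→∞} −(1/n)·log β_ε^n = H(P,Q) − H(P); that is, the Neyman–Pearson error exponent of the hypothesis test between authentic and generated text equals the cross-entropy of the language model minus the entropy of the language. -/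
open scoped BigOperators

lemma prod_sum_eq' {α : Type*} [Fintype α] [DecidableEq α] (n : ℕ) (h : Fin n → α → ℝ) :
    ∑ x : Fin n → α, ∏ i, h i (x i) = ∏ i, ∑ a, h i a := by
  rw [Finset.prod_univ_sum, Fintype.piFinset_univ]

lemma second_moment' {α : Type*} [Fintype α] [DecidableEq α] (n : ℕ) (P g : α → ℝ)
    (hP1 : ∑ a, P a = 1) (hg : ∑ a, P a * g a = 0) :
    ∑ x : Fin n → α, (∏ i, P (x i)) * (∑ i, g (x i)) ^ 2
      = n * ∑ a, P a * g a ^ 2 := by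
  have key : ∀ x : Fin n → α, (∏ i, P (x i)) * (∑ i, g (x i)) ^ 2
      = ∑ i : Fin n, ∑ j : Fin n,
          ∏ k, (P (x k) * (if k = i then g (x k) else 1) * (if k = j then g (x k) else 1)) := by
    intro x
    have : ∀ i j : Fin n,
        (∏ k, (P (x k) * (if k = i then g (x k) else 1) * (if k = j then g (x k) else 1)))
          = (∏ k, P (x k)) * (g (x i) * g (x j)) := by
      intro i j
      rw [Finset.prod_mul_distrib, Finset.prod_mul_distrib,
        Finset.prod_ite_eq' Finset.univ i (fun k => g (x k)),
        Finset.prod_ite_eq' Finset.univ j (fun k => g (x k))]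
      simp only [Finset.mem_univ, if_true]
      ring
    simp_rw [this]
    rw [sq, Finset.sum_mul_sum, Finset.mul_sum]
    refine Finset.sum_congr rfl fun i _ => ?_
    rw [Finset.mul_sum]
  simp_rw [key]
  rw [Finset.sum_comm]
  have : ∀ i : Fin n, (∑ x : Fin n → α, ∑ j : Fin n,
      ∏ k, (P (x k) * (if k = i then g (x k) else 1) * (if k = j then g (x k) else 1)))
      = ∑ j : Fin n, ∑ x : Fin n → α,
      ∏ k, (P (x k) * (if k = i then g (x k) else 1) * (if k = j then g (x k) else 1)) :=
    fun i => Finset.sum_comm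
  simp_rw [this]
  have eval : ∀ i j : Fin n,
      (∑ x : Fin n → α, ∏ k, (P (x k) * (if k = i then g (x k) else 1)
        * (if k = j then g (x k) else 1)))
      = if i = j then ∑ a, P a * g a ^ 2 else 0 := by
    intro i j
    rw [prod_sum_eq' n (fun k a => P a * (if k = i then g a else 1) * (if k = j then g a else 1))]
    by_cases hij : i = j
    · subst hij
      rw [if_pos rfl, Finset.prod_eq_single i]
      · refine Finset.sum_congr rfl fun a _ => by simp; ring
      · intro k _ hk
        simp [hk, hP1]
      · intro h; exact absurd (Finset.mem_univ i) h
    · rw [if_neg hij]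
      apply Finset.prod_eq_zero (Finset.mem_univ i)
      show (∑ a, P a * (if i = i then g a else 1) * (if i = j then g a else 1)) = 0
      rw [← hg]
      exact Finset.sum_congr rfl fun a _ => by rw [if_pos rfl, if_neg hij, mul_one]
  simp_rw [eval]
  simp [Finset.sum_ite_eq, mul_comm]

lemma cheb' {α : Type*} [Fintype α] [DecidableEq α] (n : ℕ) (hn : 0 < n) (P g : α → ℝ)
    (hP0 : ∀ a, 0 ≤ P a) (hP1 : ∑ a, P a = 1) (hg : ∑ a, P a * g a = 0)
    (δ : ℝ) (hδ : 0 < δ) :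
    ∑ x ∈ Finset.univ.filter (fun x : Fin n → α => (n : ℝ) * δ ≤ |∑ i, g (x i)|), ∏ i, P (x i)
      ≤ (∑ a, P a * g a ^ 2) / ((n : ℝ) * δ ^ 2) := by
  have hn' : (0 : ℝ) < n := by exact_mod_cast hn
  have ht : (0 : ℝ) < (n : ℝ) * δ := by positivity
  set S := ∑ x ∈ Finset.univ.filter (fun x : Fin n → α => (n : ℝ) * δ ≤ |∑ i, g (x i)|),
      ∏ i, P (x i) with hS
  have hprod0 : ∀ x : Fin n → α, 0 ≤ ∏ i, P (x i) :=
    fun x => Finset.prod_nonneg fun i _ => hP0 (x i)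
  have h1 : S * ((n : ℝ) * δ) ^ 2 ≤ (n : ℝ) * ∑ a, P a * g a ^ 2 := by
    rw [← second_moment' n P g hP1 hg, hS, Finset.sum_mul]
    calc ∑ x ∈ Finset.univ.filter (fun x : Fin n → α => (n : ℝ) * δ ≤ |∑ i, g (x i)|),
          (∏ i, P (x i)) * ((n : ℝ) * δ) ^ 2
        ≤ ∑ x ∈ Finset.univ.filter (fun x : Fin n → α => (n : ℝ) * δ ≤ |∑ i, g (x i)|),
          (∏ i, P (x i)) * (∑ i, g (x i)) ^ 2 := by
          apply Finset.sum_le_sum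
          intro x hx
          rw [Finset.mem_filter] at hx
          have h2 : ((n : ℝ) * δ) ^ 2 ≤ (∑ i, g (x i)) ^ 2 := by
            rw [← sq_abs (∑ i, g (x i))]
            exact pow_le_pow_left₀ ht.le hx.2 2
          exact mul_le_mul_of_nonneg_left h2 (hprod0 x)
      _ ≤ ∑ x : Fin n → α, (∏ i, P (x i)) * (∑ i, g (x i)) ^ 2 := by
          apply Finset.sum_le_sum_of_subset_of_nonneg (Finset.filter_subset _ _)
          intro x _ _
          exact mul_nonneg (hprod0 x) (sq_nonneg _)
  have hS_le : S ≤ ((n : ℝ) * ∑ a, P a * g a ^ 2) / ((n : ℝ) * δ) ^ 2 := by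
    rw [le_div_iff₀ (by positivity)]
    exact h1
  calc S ≤ ((n : ℝ) * ∑ a, P a * g a ^ 2) / ((n : ℝ) * δ) ^ 2 := hS_le
    _ = (∑ a, P a * g a ^ 2) / ((n : ℝ) * δ ^ 2) := by
        field_simp

/-- **Error exponent for detecting a given language model, in terms of cross-entropy.**
Let `P` (authentic text) and `Q` (language-model output) be probability mass functions on a
finite alphabet `α` with `Q` everywhere positive, and let `ε ∈ (0,1)`.  With
`β n = min { Q^⊗n(A) : A ⊆ αⁿ, P^⊗n(A) ≥ 1 − ε }` the optimal Neyman–Pearson error on `n`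
i.i.d. tokens, the error exponent satisfies
`lim (−(1/n) log (β n)) = H(P,Q) − H(P)`, the cross-entropy minus the entropy. -/
theorem error_exponent_eq_cross_entropy_sub_entropy
    {α : Type*} [Fintype α] [Nonempty α] [DecidableEq α]
    (P Q : α → ℝ)
    (hP_nonneg : ∀ a, 0 ≤ P a) (hP_sum : ∑ a, P a = 1)
    (hQ_pos : ∀ a, 0 < Q a) (hQ_sum : ∑ a, Q a = 1)
    (ε : ℝ) (hε : ε ∈ Set.Ioo (0 : ℝ) 1)
    (β : ℕ → ℝ)
    (hβ : ∀ n, β n = sInf { b : ℝ | ∃ A : Finset (Fin n → α),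
        1 - ε ≤ ∑ x ∈ A, ∏ i, P (x i) ∧ b = ∑ x ∈ A, ∏ i, Q (x i) }) :
    Filter.Tendsto (fun n : ℕ => -(1 / (n : ℝ)) * Real.log (β n)) Filter.atTop
      (nhds ((-∑ a, P a * Real.log (Q a)) - (-∑ a, P a * Real.log (P a)))) := by
  obtain ⟨hε0, hε1⟩ := hε
  set D : ℝ := ∑ a, P a * (Real.log (P a) - Real.log (Q a)) with hD
  have hTarget : (-∑ a, P a * Real.log (Q a)) - (-∑ a, P a * Real.log (P a)) = D := by
    rw [hD]
    simp_rw [mul_sub]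
    rw [Finset.sum_sub_distrib]
    ring
  rw [hTarget]
  set g : α → ℝ := fun a => Real.log (P a) - Real.log (Q a) - D with hgdef
  have hgsum : ∑ a, P a * g a = 0 := by
    have h1 : ∑ a, P a * g a
        = (∑ a, P a * (Real.log (P a) - Real.log (Q a))) - (∑ a, P a) * D := by
      rw [Finset.sum_mul, ← Finset.sum_sub_distrib]
      refine Finset.sum_congr rfl fun a _ => by rw [hgdef]; ring
    rw [h1, hP_sum, ← hD]; ring
  set V : ℝ := ∑ a, P a * g a ^ 2 with hV
  have hV0 : 0 ≤ V := Finset.sum_nonneg fun a _ => mul_nonneg (hP_nonneg a) (sq_nonneg _)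
  have hPprod_nonneg : ∀ (n : ℕ) (x : Fin n → α), 0 ≤ ∏ i, P (x i) :=
    fun n x => Finset.prod_nonneg fun i _ => hP_nonneg (x i)
  have hQprod_pos : ∀ (n : ℕ) (x : Fin n → α), 0 < ∏ i, Q (x i) :=
    fun n x => Finset.prod_pos fun i _ => hQ_pos (x i)
  have hPn_univ : ∀ n : ℕ, ∑ x : Fin n → α, ∏ i, P (x i) = 1 := by
    intro n
    rw [prod_sum_eq' n (fun _ a => P a)]
    simp [hP_sum]
  have hPn_le_one : ∀ (n : ℕ) (A : Finset (Fin n → α)), ∑ x ∈ A, ∏ i, P (x i) ≤ 1 := by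
    intro n A
    calc ∑ x ∈ A, ∏ i, P (x i) ≤ ∑ x : Fin n → α, ∏ i, P (x i) :=
          Finset.sum_le_sum_of_subset_of_nonneg (Finset.subset_univ A)
            (fun x _ _ => hPprod_nonneg n x)
      _ = 1 := hPn_univ n
  have hSne : ∀ n : ℕ, { b : ℝ | ∃ A : Finset (Fin n → α),
      1 - ε ≤ ∑ x ∈ A, ∏ i, P (x i) ∧ b = ∑ x ∈ A, ∏ i, Q (x i) }.Nonempty := by
    intro n
    exact ⟨_, Finset.univ, by rw [hPn_univ n]; linarith, rfl⟩
  have hSbdd : ∀ n : ℕ, BddBelow { b : ℝ | ∃ A : Finset (Fin n → α),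
      1 - ε ≤ ∑ x ∈ A, ∏ i, P (x i) ∧ b = ∑ x ∈ A, ∏ i, Q (x i) } := by
    intro n
    refine ⟨0, ?_⟩
    rintro b ⟨A, -, rfl⟩
    exact Finset.sum_nonneg fun x _ => (hQprod_pos n x).le
  have hsum_g : ∀ (n : ℕ) (x : Fin n → α),
      ∑ i, g (x i) = (∑ i, (Real.log (P (x i)) - Real.log (Q (x i)))) - n * D := by
    intro n x
    simp_rw [hgdef]
    rw [Finset.sum_sub_distrib]
    simp [Finset.sum_const, Finset.card_univ, nsmul_eq_mul]
  have hpoint : ∀ (n : ℕ) (δ : ℝ), 0 < δ → ∀ x : Fin n → α, |∑ i, g (x i)| ≤ (n : ℝ) * δ →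
      (0 < ∏ i, P (x i) →
        ∏ i, Q (x i) ≤ Real.exp (-((n : ℝ) * (D - δ))) * ∏ i, P (x i)) ∧
      Real.exp (-((n : ℝ) * (D + δ))) * ∏ i, P (x i) ≤ ∏ i, Q (x i) := by
    intro n δ hδ x hx
    obtain ⟨habs1, habs2⟩ := abs_le.mp hx
    have hQp := hQprod_pos n x
    have hlogQ : Real.log (∏ i, Q (x i)) = ∑ i, Real.log (Q (x i)) :=
      Real.log_prod (fun i _ => (hQ_pos (x i)).ne')
    have hsplit : ∑ i, (Real.log (P (x i)) - Real.log (Q (x i)))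
        = ∑ i, Real.log (P (x i)) - ∑ i, Real.log (Q (x i)) := Finset.sum_sub_distrib _ _
    have hexpand1 : (n : ℝ) * (D - δ) = n * D - n * δ := by ring
    have hexpand2 : (n : ℝ) * (D + δ) = n * D + n * δ := by ring
    have hgg := hsum_g n x
    constructor
    · intro hPp
      have hPne : ∀ i ∈ Finset.univ, P (x i) ≠ 0 := by
        intro i _ h0
        rw [Finset.prod_eq_zero (Finset.mem_univ i) h0] at hPp
        exact lt_irrefl 0 hPp
      have hlogP : Real.log (∏ i, P (x i)) = ∑ i, Real.log (P (x i)) :=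
        Real.log_prod hPne
      have h1 : Real.log (∏ i, Q (x i)) ≤ Real.log (∏ i, P (x i)) - n * (D - δ) := by
        rw [hlogP, hlogQ]
        linarith [hgg, hsplit, habs1, hexpand1]
      calc ∏ i, Q (x i) = Real.exp (Real.log (∏ i, Q (x i))) := (Real.exp_log hQp).symm
        _ ≤ Real.exp (Real.log (∏ i, P (x i)) - (n : ℝ) * (D - δ)) := Real.exp_le_exp.mpr h1
        _ = Real.exp (-((n : ℝ) * (D - δ))) * ∏ i, P (x i) := by
            rw [sub_eq_add_neg, Real.exp_add, Real.exp_log hPp, mul_comm]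
    · by_cases hPp : 0 < ∏ i, P (x i)
      · have hPne : ∀ i ∈ Finset.univ, P (x i) ≠ 0 := by
          intro i _ h0
          rw [Finset.prod_eq_zero (Finset.mem_univ i) h0] at hPp
          exact lt_irrefl 0 hPp
        have hlogP : Real.log (∏ i, P (x i)) = ∑ i, Real.log (P (x i)) :=
          Real.log_prod hPne
        have h1 : Real.log (∏ i, P (x i)) - n * (D + δ) ≤ Real.log (∏ i, Q (x i)) := by
          rw [hlogP, hlogQ]
          linarith [hgg, hsplit, habs2, hexpand2]
        calc Real.exp (-((n : ℝ) * (D + δ))) * ∏ i, P (x i)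
            = Real.exp (Real.log (∏ i, P (x i)) - (n : ℝ) * (D + δ)) := by
              rw [sub_eq_add_neg, Real.exp_add, Real.exp_log hPp, mul_comm]
          _ ≤ Real.exp (Real.log (∏ i, Q (x i))) := Real.exp_le_exp.mpr h1
          _ = ∏ i, Q (x i) := Real.exp_log hQp
      · have h0 : ∏ i, P (x i) = 0 := le_antisymm (not_lt.mp hPp) (hPprod_nonneg n x)
        rw [h0, mul_zero]
        exact hQp.le
  have hMain : ∀ δ : ℝ, 0 < δ → ∀ᶠ n : ℕ in Filter.atTop,
      D - δ ≤ -(1 / (n : ℝ)) * Real.log (β n) ∧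
      -(1 / (n : ℝ)) * Real.log (β n) ≤ D + 2 * δ := by
    intro δ hδ
    set θ : ℝ := min ε ((1 - ε) / 2) with hθdef
    have hθ : 0 < θ := lt_min hε0 (by linarith)
    have hθε : θ ≤ ε := min_le_left _ _
    have hθε' : θ ≤ (1 - ε) / 2 := min_le_right _ _
    set L : ℝ := Real.log (2 / (1 - ε)) with hLdef
    obtain ⟨N₀, hN₀⟩ := exists_nat_ge (max (V / (θ * δ ^ 2)) (L / δ))
    refine Filter.eventually_atTop.mpr ⟨N₀ + 1, fun n hn => ?_⟩
    have hnpos : 0 < n := lt_of_lt_of_le (Nat.succ_pos N₀) hn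
    have hnR : (0 : ℝ) < n := by exact_mod_cast hnpos
    have hNn : (N₀ : ℝ) ≤ n := by exact_mod_cast Nat.le_of_succ_le hn
    have hnθ : V / ((n : ℝ) * δ ^ 2) ≤ θ := by
      have h1 : V / (θ * δ ^ 2) ≤ (n : ℝ) := le_trans (le_trans (le_max_left _ _) hN₀) hNn
      have h2 : V ≤ (n : ℝ) * (θ * δ ^ 2) := (div_le_iff₀ (by positivity)).mp h1
      rw [div_le_iff₀ (by positivity)]
      nlinarith
    have hnL : L ≤ (n : ℝ) * δ := by
      have h1 : L / δ ≤ (n : ℝ) := le_trans (le_trans (le_max_right _ _) hN₀) hNn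
      calc L = (L / δ) * δ := by field_simp
        _ ≤ (n : ℝ) * δ := mul_le_mul_of_nonneg_right h1 hδ.le
    -- bad / good sets
    set bad : Finset (Fin n → α) :=
      Finset.univ.filter (fun x : Fin n → α => (n : ℝ) * δ ≤ |∑ i, g (x i)|) with hbaddef
    have hbad : ∑ x ∈ bad, ∏ i, P (x i) ≤ θ :=
      le_trans (cheb' n hnpos P g hP_nonneg hP_sum hgsum δ hδ) hnθ
    set good : Finset (Fin n → α) :=
      Finset.univ.filter (fun x : Fin n → α => ¬ ((n : ℝ) * δ ≤ |∑ i, g (x i)|)) with hgooddef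
    have hgood : 1 - θ ≤ ∑ x ∈ good, ∏ i, P (x i) := by
      have := Finset.sum_filter_add_sum_filter_not Finset.univ
        (fun x : Fin n → α => (n : ℝ) * δ ≤ |∑ i, g (x i)|) (fun x => ∏ i, P (x i))
      rw [hPn_univ n] at this
      rw [hgooddef]
      rw [hbaddef] at hbad
      linarith
    -- upper bound on β n
    set A : Finset (Fin n → α) := good.filter (fun x => 0 < ∏ i, P (x i)) with hAdef
    have hPA : ∑ x ∈ A, ∏ i, P (x i) = ∑ x ∈ good, ∏ i, P (x i) := by
      have hsplit := Finset.sum_filter_add_sum_filter_not good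
        (fun x : Fin n → α => 0 < ∏ i, P (x i)) (fun x => ∏ i, P (x i))
      have hzero : ∑ x ∈ good.filter (fun x => ¬ 0 < ∏ i, P (x i)), ∏ i, P (x i) = 0 := by
        apply Finset.sum_eq_zero
        intro x hx
        exact le_antisymm (not_lt.mp (Finset.mem_filter.mp hx).2) (hPprod_nonneg n x)
      rw [hAdef]
      linarith [hsplit, hzero]
    have hPA_ge : 1 - ε ≤ ∑ x ∈ A, ∏ i, P (x i) := by rw [hPA]; linarith
    have hmemA : ∀ x ∈ A, |∑ i, g (x i)| ≤ (n : ℝ) * δ ∧ 0 < ∏ i, P (x i) := by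
      intro x hx
      rw [hAdef, Finset.mem_filter, hgooddef, Finset.mem_filter] at hx
      exact ⟨(not_le.mp hx.1.2).le, hx.2⟩
    have hQA : ∑ x ∈ A, ∏ i, Q (x i) ≤ Real.exp (-((n : ℝ) * (D - δ))) := by
      calc ∑ x ∈ A, ∏ i, Q (x i)
          ≤ ∑ x ∈ A, Real.exp (-((n : ℝ) * (D - δ))) * ∏ i, P (x i) := by
            refine Finset.sum_le_sum fun x hx => ?_
            obtain ⟨h1, h2⟩ := hmemA x hx
            exact (hpoint n δ hδ x h1).1 h2
        _ = Real.exp (-((n : ℝ) * (D - δ))) * ∑ x ∈ A, ∏ i, P (x i) := by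
            rw [Finset.mul_sum]
        _ ≤ Real.exp (-((n : ℝ) * (D - δ))) * 1 :=
            mul_le_mul_of_nonneg_left (hPn_le_one n A) (Real.exp_pos _).le
        _ = Real.exp (-((n : ℝ) * (D - δ))) := mul_one _
    have hβ_up : β n ≤ Real.exp (-((n : ℝ) * (D - δ))) := by
      rw [hβ n]
      exact le_trans (csInf_le (hSbdd n) ⟨A, hPA_ge, rfl⟩) hQA
    -- lower bound on β n
    have hβ_low : Real.exp (-((n : ℝ) * (D + δ))) * ((1 - ε) / 2) ≤ β n := by
      rw [hβ n]
      refine le_csInf (hSne n) ?_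
      rintro b ⟨A', hA'P, rfl⟩
      set AG : Finset (Fin n → α) :=
        A'.filter (fun x => ¬ ((n : ℝ) * δ ≤ |∑ i, g (x i)|)) with hAGdef
      have hsplit := Finset.sum_filter_add_sum_filter_not A'
        (fun x : Fin n → α => (n : ℝ) * δ ≤ |∑ i, g (x i)|) (fun x => ∏ i, P (x i))
      have hsub : A'.filter (fun x : Fin n → α => (n : ℝ) * δ ≤ |∑ i, g (x i)|) ⊆ bad := by
        intro x hx
        rw [hbaddef, Finset.mem_filter]
        exact ⟨Finset.mem_univ x, (Finset.mem_filter.mp hx).2⟩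
      have hbadpart : ∑ x ∈ A'.filter (fun x : Fin n → α => (n : ℝ) * δ ≤ |∑ i, g (x i)|),
          ∏ i, P (x i) ≤ θ :=
        le_trans (Finset.sum_le_sum_of_subset_of_nonneg hsub (fun x _ _ => hPprod_nonneg n x))
          hbad
      have hAG_P : (1 - ε) / 2 ≤ ∑ x ∈ AG, ∏ i, P (x i) := by
        rw [hAGdef]
        linarith
      calc Real.exp (-((n : ℝ) * (D + δ))) * ((1 - ε) / 2)
          ≤ Real.exp (-((n : ℝ) * (D + δ))) * ∑ x ∈ AG, ∏ i, P (x i) :=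
            mul_le_mul_of_nonneg_left hAG_P (Real.exp_pos _).le
        _ = ∑ x ∈ AG, Real.exp (-((n : ℝ) * (D + δ))) * ∏ i, P (x i) := Finset.mul_sum _ _ _
        _ ≤ ∑ x ∈ AG, ∏ i, Q (x i) := by
            refine Finset.sum_le_sum fun x hx => ?_
            have hxg : |∑ i, g (x i)| ≤ (n : ℝ) * δ := by
              rw [hAGdef, Finset.mem_filter] at hx
              exact (not_le.mp hx.2).le
            exact (hpoint n δ hδ x hxg).2
        _ ≤ ∑ x ∈ A', ∏ i, Q (x i) :=
            Finset.sum_le_sum_of_subset_of_nonneg (Finset.filter_subset _ _)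
              (fun x _ _ => (hQprod_pos n x).le)
    have hc_pos : (0 : ℝ) < (1 - ε) / 2 := by linarith
    have hβpos : 0 < β n := lt_of_lt_of_le (by positivity) hβ_low
    -- bounds on the exponent
    have hinv : (0 : ℝ) < 1 / (n : ℝ) := by positivity
    have hlogβ_up : Real.log (β n) ≤ -((n : ℝ) * (D - δ)) := by
      calc Real.log (β n) ≤ Real.log (Real.exp (-((n : ℝ) * (D - δ)))) :=
            Real.log_le_log hβpos hβ_up
        _ = -((n : ℝ) * (D - δ)) := Real.log_exp _
    have hlogβ_low : -((n : ℝ) * (D + δ)) + Real.log ((1 - ε) / 2) ≤ Real.log (β n) := by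
      have h1 : Real.log (Real.exp (-((n : ℝ) * (D + δ))) * ((1 - ε) / 2))
          = -((n : ℝ) * (D + δ)) + Real.log ((1 - ε) / 2) := by
        rw [Real.log_mul (Real.exp_ne_zero _) (ne_of_gt hc_pos), Real.log_exp]
      rw [← h1]
      exact Real.log_le_log (by positivity) hβ_low
    have hL' : Real.log ((1 - ε) / 2) = -L := by
      rw [hLdef, ← Real.log_inv, inv_div]
    have hne : (n : ℝ) ≠ 0 := ne_of_gt hnR
    constructor
    · have m1 := mul_le_mul_of_nonneg_left hlogβ_up hinv.le
      have e1 : (1 / (n : ℝ)) * (-((n : ℝ) * (D - δ))) = -(D - δ) := by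
        field_simp
      rw [e1] at m1
      linarith [m1]
    · have m1 := mul_le_mul_of_nonneg_left hlogβ_low hinv.le
      have e2 : (1 / (n : ℝ)) * (-((n : ℝ) * (D + δ)) + Real.log ((1 - ε) / 2))
          = -(D + δ) - (1 / (n : ℝ)) * L := by
        rw [hL']
        field_simp
        ring
      rw [e2] at m1
      have h3 : (1 / (n : ℝ)) * L ≤ δ := by
        rw [div_mul_eq_mul_div, one_mul, div_le_iff₀ hnR]
        linarith [hnL]
      linarith [m1, h3]
  rw [Metric.tendsto_atTop]
  intro r hr
  have hδ : (0 : ℝ) < r / 3 := by linarith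
  obtain ⟨N, hN⟩ := Filter.eventually_atTop.mp (hMain (r / 3) hδ)
  refine ⟨N, fun n hn => ?_⟩
  obtain ⟨h1, h2⟩ := hN n hn
  rw [Real.dist_eq, abs_lt]
  constructor <;> linarith
end

section
/- (Chernoff bound on Bayesian error.) Let P and Q be probability mass functions on a common finite alphabet 𝒜, both everywhere positive, with equal prior probabilities 1/2 on the two hypotheses. For each n, the minimal Bayesian probability of error P_e^{(n)} = min_{A ⊆ 𝒜^n} [ (1/2)·P^{⊗n}(𝒜^n \ A) + (1/2)·Q^{⊗n}(A) ] satisfies P_e^{(n)} ≤ exp(−n·C(P,Q)), where C(P,Q) = sup_{0 ≤ λ ≤ 1} ( −log ∑_{a∈𝒜} P(a)^λ · Q(a)^{1−λ} ) is the Chernoff information between P and Q. -/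
open scoped BigOperators

/-- **Chernoff bound on the Bayesian error.**  Let `P` and `Q` be everywhere-positive
probability mass functions on a finite alphabet `α`, with equal priors `1/2` on the two
hypotheses.  For each `n`, the minimal Bayesian probability of error
`P_e^(n) = min_{A ⊆ αⁿ} [ (1/2) P^⊗n(αⁿ \ A) + (1/2) Q^⊗n(A) ]` satisfies
`P_e^(n) ≤ exp (−n C(P,Q))`, where
`C(P,Q) = sup_{0 ≤ λ ≤ 1} (−log ∑ a, (P a)^λ (Q a)^(1−λ))` is the Chernoff information. -/
theorem bayesian_error_le_exp_neg_chernoff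
    {α : Type*} [Fintype α] [Nonempty α] [DecidableEq α]
    (P Q : α → ℝ)
    (hP_pos : ∀ a, 0 < P a) (hP_sum : ∑ a, P a = 1)
    (hQ_pos : ∀ a, 0 < Q a) (hQ_sum : ∑ a, Q a = 1)
    (C : ℝ)
    (hC : C = sSup { c : ℝ | ∃ l ∈ Set.Icc (0 : ℝ) 1,
        c = -Real.log (∑ a, P a ^ l * Q a ^ (1 - l)) })
    (n : ℕ)
    (Pe : ℝ)
    (hPe : Pe = sInf { e : ℝ | ∃ A : Finset (Fin n → α),
        e = (1 / 2) * (∑ x ∈ Aᶜ, ∏ i, P (x i)) + (1 / 2) * (∑ x ∈ A, ∏ i, Q (x i)) }) :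
    Pe ≤ Real.exp (-(n : ℝ) * C) := by
  have hSpos : ∀ l : ℝ, 0 < ∑ a, P a ^ l * Q a ^ (1 - l) := fun l =>
    Finset.sum_pos (fun a _ => mul_pos (Real.rpow_pos_of_pos (hP_pos a) _)
      (Real.rpow_pos_of_pos (hQ_pos a) _)) Finset.univ_nonempty
  -- continuity of f l = -log S l
  have hScont : Continuous fun l : ℝ => ∑ a, P a ^ l * Q a ^ (1 - l) := by
    apply continuous_finset_sum
    intro a _
    have h1 : Continuous fun l : ℝ => P a ^ l := by
      simp only [Real.rpow_def_of_pos (hP_pos a)]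
      fun_prop
    have h2 : Continuous fun l : ℝ => Q a ^ (1 - l) := by
      simp only [Real.rpow_def_of_pos (hQ_pos a)]
      fun_prop
    exact h1.mul h2
  have hfcont : Continuous fun l : ℝ => -Real.log (∑ a, P a ^ l * Q a ^ (1 - l)) :=
    (hScont.log fun l => (hSpos l).ne').neg
  have hset : { c : ℝ | ∃ l ∈ Set.Icc (0 : ℝ) 1,
        c = -Real.log (∑ a, P a ^ l * Q a ^ (1 - l)) }
      = (fun l : ℝ => -Real.log (∑ a, P a ^ l * Q a ^ (1 - l))) '' Set.Icc 0 1 := by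
    ext c
    simp only [Set.mem_setOf_eq, Set.mem_image]
    exact ⟨fun ⟨l, hl, h⟩ => ⟨l, hl, h.symm⟩, fun ⟨l, hl, h⟩ => ⟨l, hl, h.symm⟩⟩
  have hCmem : C ∈ (fun l : ℝ => -Real.log (∑ a, P a ^ l * Q a ^ (1 - l))) '' Set.Icc 0 1 := by
    rw [hC, hset]
    exact (isCompact_Icc.image hfcont).sSup_mem
      ((Set.nonempty_Icc.2 zero_le_one).image _)
  obtain ⟨l, hl, hCl⟩ := hCmem
  simp only at hCl
  set S : ℝ := ∑ a, P a ^ l * Q a ^ (1 - l) with hSdef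
  have hSp : 0 < S := hSpos l
  -- choose ML acceptance region
  set A : Finset (Fin n → α) :=
    Finset.univ.filter (fun x => ∏ i, Q (x i) ≤ ∏ i, P (x i)) with hA
  set g : (Fin n → α) → ℝ := fun x => ∏ i, (P (x i) ^ l * Q (x i) ^ (1 - l)) with hg
  have hgnonneg : ∀ x, 0 ≤ g x := fun x =>
    Finset.prod_nonneg fun i _ => le_of_lt (mul_pos (Real.rpow_pos_of_pos (hP_pos _) _)
      (Real.rpow_pos_of_pos (hQ_pos _) _))
  have hgx : ∀ x : Fin n → α,
      g x = (∏ i, P (x i)) ^ l * (∏ i, Q (x i)) ^ (1 - l) := by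
    intro x
    rw [hg]
    simp only
    rw [Finset.prod_mul_distrib,
      Real.finset_prod_rpow _ _ (fun i _ => (hP_pos (x i)).le) l,
      Real.finset_prod_rpow _ _ (fun i _ => (hQ_pos (x i)).le) (1 - l)]
  have hPprod : ∀ x : Fin n → α, 0 < ∏ i, P (x i) :=
    fun x => Finset.prod_pos fun i _ => hP_pos _
  have hQprod : ∀ x : Fin n → α, 0 < ∏ i, Q (x i) :=
    fun x => Finset.prod_pos fun i _ => hQ_pos _
  -- pointwise bounds
  have hboundP : ∀ x ∈ Aᶜ, ∏ i, P (x i) ≤ g x := by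
    intro x hx
    rw [Finset.mem_compl, hA, Finset.mem_filter] at hx
    have hle : ∏ i, P (x i) ≤ ∏ i, Q (x i) := by
      by_contra h
      exact hx ⟨Finset.mem_univ _, le_of_not_ge h⟩
    rw [hgx]
    calc ∏ i, P (x i) = (∏ i, P (x i)) ^ l * (∏ i, P (x i)) ^ (1 - l) := by
          rw [← Real.rpow_add (hPprod x), add_sub_cancel, Real.rpow_one]
      _ ≤ (∏ i, P (x i)) ^ l * (∏ i, Q (x i)) ^ (1 - l) := by
          apply mul_le_mul_of_nonneg_left
          · exact Real.rpow_le_rpow (hPprod x).le hle (by linarith [hl.2])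
          · exact (Real.rpow_pos_of_pos (hPprod x) l).le
  have hboundQ : ∀ x ∈ A, ∏ i, Q (x i) ≤ g x := by
    intro x hx
    rw [hA, Finset.mem_filter] at hx
    rw [hgx]
    calc ∏ i, Q (x i) = (∏ i, Q (x i)) ^ l * (∏ i, Q (x i)) ^ (1 - l) := by
          rw [← Real.rpow_add (hQprod x), add_sub_cancel, Real.rpow_one]
      _ ≤ (∏ i, P (x i)) ^ l * (∏ i, Q (x i)) ^ (1 - l) := by
          apply mul_le_mul_of_nonneg_right
          · exact Real.rpow_le_rpow (hQprod x).le hx.2 hl.1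
          · exact (Real.rpow_pos_of_pos (hQprod x) _).le
  -- sum of g equals S^n
  have hsumg : ∑ x : Fin n → α, g x = S ^ n := by
    rw [hSdef]
    have := Finset.prod_univ_sum (fun _ : Fin n => (Finset.univ : Finset α))
      (fun _ a => P a ^ l * Q a ^ (1 - l))
    rw [Fintype.piFinset_univ] at this
    rw [← this, Finset.prod_const, Finset.card_univ, Fintype.card_fin]
  -- Pe ≤ error of A
  have hPe_le : Pe ≤ (1 / 2) * (∑ x ∈ Aᶜ, ∏ i, P (x i)) + (1 / 2) * (∑ x ∈ A, ∏ i, Q (x i)) := by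
    rw [hPe]
    apply csInf_le
    · refine ⟨0, fun e he => ?_⟩
      obtain ⟨B, rfl⟩ := he
      have h1 : 0 ≤ ∑ x ∈ Bᶜ, ∏ i, P (x i) :=
        Finset.sum_nonneg fun x _ => (hPprod x).le
      have h2 : 0 ≤ ∑ x ∈ B, ∏ i, Q (x i) :=
        Finset.sum_nonneg fun x _ => (hQprod x).le
      linarith
    · exact ⟨A, rfl⟩
  have hsum_le : (∑ x ∈ Aᶜ, ∏ i, P (x i)) + (∑ x ∈ A, ∏ i, Q (x i)) ≤ S ^ n := by
    calc (∑ x ∈ Aᶜ, ∏ i, P (x i)) + (∑ x ∈ A, ∏ i, Q (x i))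
        ≤ (∑ x ∈ Aᶜ, g x) + (∑ x ∈ A, g x) :=
          add_le_add (Finset.sum_le_sum hboundP) (Finset.sum_le_sum hboundQ)
      _ = ∑ x : Fin n → α, g x := Finset.sum_compl_add_sum A g
      _ = S ^ n := hsumg
  have hSn_nonneg : (0:ℝ) ≤ S ^ n := (pow_pos hSp n).le
  have hfinal : Pe ≤ S ^ n := by
    have h1 : 0 ≤ ∑ x ∈ Aᶜ, ∏ i, P (x i) := Finset.sum_nonneg fun x _ => (hPprod x).le
    have h2 : 0 ≤ ∑ x ∈ A, ∏ i, Q (x i) := Finset.sum_nonneg fun x _ => (hQprod x).le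
    linarith
  calc Pe ≤ S ^ n := hfinal
    _ = Real.exp (-(n : ℝ) * C) := by
        rw [← hCl, hSdef]
        rw [show -(n:ℝ) * -Real.log (∑ a, P a ^ l * Q a ^ (1 - l))
            = (n:ℝ) * Real.log (∑ a, P a ^ l * Q a ^ (1 - l)) by ring,
          Real.exp_nat_mul, Real.exp_log (hSpos l)]
end

section
/- (Reverse Pinsker inequality.) Let P and Q be probability mass functions on a common finite alphabet 𝒜 with Q_min = min_{a∈𝒜} Q(a) > 0. Then D_KL(P‖Q) ≤ (1/Q_min) · |P − Q|², where |P − Q| = ∑_{a∈𝒜} |P(a) − Q(a)| is the total variation (L¹) distance between P and Q and the divergence is measured in nats. -/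
open scoped BigOperators

/-- **Reverse Pinsker inequality.**  Let `P` and `Q` be probability mass functions on a common
finite alphabet `α` with `Q_min = min_a Q a > 0`.  Then, in nats,
`D_KL(P‖Q) ≤ (1 / Q_min) * |P − Q|²`,
where `|P − Q| = ∑ a, |P a − Q a|` is the L¹ (total variation) distance. -/
theorem reverse_pinsker
    {α : Type*} [Fintype α] [Nonempty α]
    (P Q : α → ℝ)
    (hP_nonneg : ∀ a, 0 ≤ P a) (hP_sum : ∑ a, P a = 1)
    (hQ_pos : ∀ a, 0 < Q a) (hQ_sum : ∑ a, Q a = 1)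
    (Qmin : ℝ) (hQmin : Qmin = Finset.univ.inf' Finset.univ_nonempty Q) :
    ∑ a ∈ Finset.univ.filter (fun a => 0 < P a), P a * Real.log (P a / Q a) ≤
      (1 / Qmin) * (∑ a, |P a - Q a|) ^ 2 := by
  have hQmin_pos : 0 < Qmin := by
    rw [hQmin, Finset.lt_inf'_iff]
    exact fun b _ => hQ_pos b
  have hQmin_le : ∀ a, Qmin ≤ Q a := fun a => by
    rw [hQmin]; exact Finset.inf'_le _ (Finset.mem_univ a)
  -- Step 1: termwise log bound
  have h1 : ∑ a ∈ Finset.univ.filter (fun a => 0 < P a), P a * Real.log (P a / Q a)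
      ≤ ∑ a ∈ Finset.univ.filter (fun a => 0 < P a), (P a ^ 2 / Q a - P a) := by
    apply Finset.sum_le_sum
    intro a ha
    have hPa : 0 < P a := (Finset.mem_filter.mp ha).2
    have hx : 0 < P a / Q a := div_pos hPa (hQ_pos a)
    have := Real.log_le_sub_one_of_pos hx
    calc P a * Real.log (P a / Q a) ≤ P a * (P a / Q a - 1) := by
          exact mul_le_mul_of_nonneg_left this hPa.le
      _ = P a ^ 2 / Q a - P a := by rw [mul_sub, mul_one, sq, mul_div_assoc]
  -- Step 2: extend sum to all of univ
  have h2 : ∑ a ∈ Finset.univ.filter (fun a => 0 < P a), (P a ^ 2 / Q a - P a)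
      = ∑ a, (P a ^ 2 / Q a - P a) := by
    apply Finset.sum_subset (Finset.filter_subset _ _)
    intro a _ ha
    have : P a = 0 := by
      rcases (hP_nonneg a).lt_or_eq with h | h
      · exact absurd (Finset.mem_filter.mpr ⟨Finset.mem_univ a, h⟩) ha
      · exact h.symm
    rw [this]
    simp
  -- Step 3: chi-square identity
  have h3 : ∑ a, (P a ^ 2 / Q a - P a) = ∑ a, (P a - Q a) ^ 2 / Q a := by
    have : ∀ a, (P a - Q a) ^ 2 / Q a = (P a ^ 2 / Q a - P a) + (Q a - P a) := by
      intro a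
      have hQa := (hQ_pos a).ne'
      field_simp
      ring
    simp_rw [this]
    rw [Finset.sum_add_distrib, Finset.sum_sub_distrib, Finset.sum_sub_distrib, hQ_sum, hP_sum]
    ring
  -- Step 4: bound chi-square
  have h4 : ∑ a, (P a - Q a) ^ 2 / Q a ≤ (1 / Qmin) * ∑ a, (P a - Q a) ^ 2 := by
    rw [Finset.mul_sum]
    apply Finset.sum_le_sum
    intro a _
    rw [div_eq_inv_mul, one_div]
    exact mul_le_mul_of_nonneg_right (by
      exact inv_anti₀ hQmin_pos (hQmin_le a)) (sq_nonneg _)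
  -- Step 5: ∑ x² ≤ (∑ x)² for nonneg x
  have h5 : ∑ a, (P a - Q a) ^ 2 ≤ (∑ a, |P a - Q a|) ^ 2 := by
    have hs : ∀ a, |P a - Q a| ≤ ∑ b, |P b - Q b| := fun a =>
      Finset.single_le_sum (f := fun b => |P b - Q b|) (fun b _ => abs_nonneg _) (Finset.mem_univ a)
    calc ∑ a, (P a - Q a) ^ 2 = ∑ a, |P a - Q a| ^ 2 := by simp [sq_abs]
      _ ≤ ∑ a, |P a - Q a| * (∑ b, |P b - Q b|) := by
          apply Finset.sum_le_sum
          intro a _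
          rw [sq]
          exact mul_le_mul_of_nonneg_left (hs a) (abs_nonneg _)
      _ = (∑ a, |P a - Q a|) ^ 2 := by rw [← Finset.sum_mul, sq]
  calc ∑ a ∈ Finset.univ.filter (fun a => 0 < P a), P a * Real.log (P a / Q a)
      ≤ ∑ a, (P a - Q a) ^ 2 / Q a := by rw [← h3, ← h2]; exact h1
    _ ≤ (1 / Qmin) * ∑ a, (P a - Q a) ^ 2 := h4
    _ ≤ (1 / Qmin) * (∑ a, |P a - Q a|) ^ 2 :=
        mul_le_mul_of_nonneg_left h5 (by positivity)
end
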